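/- Let n₁, n₂ ∈ ℝ² be linearly independent vectors and set C₁ = n₁ ⊗ n₁ and C₂ = n₂ ⊗ n₂ (rank-one 2×2 matrices). Suppose ν₊₊, ν₊₋, ν₋₊, ν₋₋ are nonnegative reals with ν₊₊ + ν₊₋ + ν₋₊ + ν₋₋ = 1, satisfying the moment conditions ν₊₊(C₁+C₂) + ν₊₋(C₁−C₂) + ν₋₊(−C₁+C₂) + ν₋₋(−C₁−C₂) = 0 (as a matrix equation) and ν₊₊·det(C₁+C₂) + ν₊₋·det(C₁−C₂) + ν₋₊·det(−C₁+C₂) + ν₋₋·det(−C₁−C₂) = 0. Then ν₊₊ = ν₊₋ = ν₋₊ = ν₋₋ = 1/4. -/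

import Mathlib

open Matrix

/-- For `N = 2` with independent frequencies, the moment conditions force
all four weights to equal `1/4`. -/
theorem weights_quarter_of_moment_conditions
    (n₁ n₂ : Fin 2 → ℝ) (hind : LinearIndependent ℝ ![n₁, n₂])
    (νpp νpm νmp νmm : ℝ)
    (hpp : 0 ≤ νpp) (hpm : 0 ≤ νpm) (hmp : 0 ≤ νmp) (hmm : 0 ≤ νmm)
    (hsum : νpp + νpm + νmp + νmm = 1)
    (hbary : νpp • (vecMulVec n₁ n₁ + vecMulVec n₂ n₂)
           + νpm • (vecMulVec n₁ n₁ - vecMulVec n₂ n₂)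
           + νmp • (-vecMulVec n₁ n₁ + vecMulVec n₂ n₂)
           + νmm • (-vecMulVec n₁ n₁ - vecMulVec n₂ n₂) = 0)
    (hdet : νpp * (vecMulVec n₁ n₁ + vecMulVec n₂ n₂).det
          + νpm * (vecMulVec n₁ n₁ - vecMulVec n₂ n₂).det
          + νmp * (-vecMulVec n₁ n₁ + vecMulVec n₂ n₂).det
          + νmm * (-vecMulVec n₁ n₁ - vecMulVec n₂ n₂).det = 0) :
    νpp = 1/4 ∧ νpm = 1/4 ∧ νmp = 1/4 ∧ νmm = 1/4 := by
  obtain ⟨x0, x1, y0, y1, hx0, hx1, hy0, hy1⟩ :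
      ∃ x0 x1 y0 y1 : ℝ, n₁ 0 = x0 ∧ n₁ 1 = x1 ∧ n₂ 0 = y0 ∧ n₂ 1 = y1 :=
    ⟨_, _, _, _, rfl, rfl, rfl, rfl⟩
  have hd : x0 * y1 - x1 * y0 ≠ 0 := by
    have h : LinearIndependent ℝ (Matrix.of ![n₁, n₂]).row := hind
    rw [Matrix.linearIndependent_rows_iff_isUnit, Matrix.isUnit_iff_isUnit_det,
      isUnit_iff_ne_zero] at h
    simpa [Matrix.det_fin_two, hx0, hx1, hy0, hy1] using h
  have a := νpp + νpm - νmp - νmm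
  have e00 : (νpp + νpm - νmp - νmm) * (x0 * x0)
      + (νpp - νpm + νmp - νmm) * (y0 * y0) = 0 := by
    have h := congrFun (congrFun hbary 0) 0
    simp [vecMulVec_apply, Matrix.add_apply, Matrix.sub_apply, Matrix.neg_apply,
      Matrix.smul_apply, smul_eq_mul, hx0, hy0] at h
    linear_combination h
  have e01 : (νpp + νpm - νmp - νmm) * (x0 * x1)
      + (νpp - νpm + νmp - νmm) * (y0 * y1) = 0 := by
    have h := congrFun (congrFun hbary 0) 1
    simp [vecMulVec_apply, Matrix.add_apply, Matrix.sub_apply, Matrix.neg_apply,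
      Matrix.smul_apply, smul_eq_mul, hx0, hx1, hy0, hy1] at h
    linear_combination h
  have e11 : (νpp + νpm - νmp - νmm) * (x1 * x1)
      + (νpp - νpm + νmp - νmm) * (y1 * y1) = 0 := by
    have h := congrFun (congrFun hbary 1) 1
    simp [vecMulVec_apply, Matrix.add_apply, Matrix.sub_apply, Matrix.neg_apply,
      Matrix.smul_apply, smul_eq_mul, hx1, hy1] at h
    linear_combination h
  have hax0 : (νpp + νpm - νmp - νmm) * x0 * (x0 * y1 - x1 * y0) = 0 := by
    linear_combination y1 * e00 - y0 * e01
  have hax1 : (νpp + νpm - νmp - νmm) * x1 * (x0 * y1 - x1 * y0) = 0 := by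
    linear_combination y1 * e01 - y0 * e11
  have hax0' : (νpp + νpm - νmp - νmm) * x0 = 0 :=
    (mul_eq_zero.1 hax0).resolve_right hd
  have hax1' : (νpp + νpm - νmp - νmm) * x1 = 0 :=
    (mul_eq_zero.1 hax1).resolve_right hd
  have ha0 : νpp + νpm - νmp - νmm = 0 := by
    have h : (νpp + νpm - νmp - νmm) * (x0 * y1 - x1 * y0) = 0 := by
      linear_combination y1 * hax0' - y0 * hax1'
    exact (mul_eq_zero.1 h).resolve_right hd
  have hby0 : (νpp - νpm + νmp - νmm) * y0 = 0 := by
    have h : ((νpp - νpm + νmp - νmm) * y0) ^ 2 = 0 := by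
      linear_combination (νpp - νpm + νmp - νmm) * e00
        - ((νpp - νpm + νmp - νmm) * (x0 * x0)) * ha0
    exact pow_eq_zero_iff (two_ne_zero) |>.1 h
  have hby1 : (νpp - νpm + νmp - νmm) * y1 = 0 := by
    have h : ((νpp - νpm + νmp - νmm) * y1) ^ 2 = 0 := by
      linear_combination (νpp - νpm + νmp - νmm) * e11
        - ((νpp - νpm + νmp - νmm) * (x1 * x1)) * ha0
    exact pow_eq_zero_iff (two_ne_zero) |>.1 h
  have hb0 : νpp - νpm + νmp - νmm = 0 := by
    have h : (νpp - νpm + νmp - νmm) * (x0 * y1 - x1 * y0) = 0 := by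
      linear_combination x0 * hby1 - x1 * hby0
    exact (mul_eq_zero.1 h).resolve_right hd
  have hc : (νpp - νpm - νmp + νmm) * (x0 * y1 - x1 * y0) ^ 2 = 0 := by
    have h := hdet
    simp only [Matrix.det_fin_two, vecMulVec_apply, Matrix.add_apply, Matrix.sub_apply,
      Matrix.neg_apply, hx0, hx1, hy0, hy1] at h
    linear_combination h
  have hc0 : νpp - νpm - νmp + νmm = 0 := by
    rcases mul_eq_zero.1 hc with h | h
    · exact h
    · exact absurd (pow_eq_zero_iff two_ne_zero |>.1 h) hd
  refine ⟨by linarith, by linarith, by linarith, by linarith⟩
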